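/- For the piecewise-linear functions β(x) = 61x/100 and β̃(x) defined on [0,1] by β̃(x) = x for 0 ≤ x ≤ 1/3, β̃(x) = x/10 + 3/10 for 1/3 < x ≤ 2/3, and β̃(x) = 63x/100 − 4/75 for 2/3 < x ≤ 1, the integral ∫₀¹ (β̃(x) − β(x))·((x − β(x))/β'(x) − x) dx is strictly negative, while ∫₀¹ (β̃(x) − β(x))·((x − β̃(x))/β̃'(x) − x) dx is strictly positive (derivatives taken piecewise, almost everywhere). -/

import Mathlib

open MeasureTheory Set

noncomputable def fp_beta (x : ℝ) : ℝ := 61 * x / 100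

noncomputable def fp_betat (x : ℝ) : ℝ :=
  if x ≤ 1/3 then x
  else if x ≤ 2/3 then x / 10 + 3 / 10
  else 63 * x / 100 - 4 / 75

noncomputable def fp_betat' (x : ℝ) : ℝ :=
  if x ≤ 1/3 then 1
  else if x ≤ 2/3 then 1 / 10
  else 63 / 100

lemma fp_integ_quad (a b c0 c1 c2 : ℝ) :
    ∫ x in a..b, (c0 + c1 * x + c2 * x ^ 2) =
      (c0 * b + c1 * b ^ 2 / 2 + c2 * b ^ 3 / 3) - (c0 * a + c1 * a ^ 2 / 2 + c2 * a ^ 3 / 3) := by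
  have h : ∀ x ∈ Set.uIcc a b,
      HasDerivAt (fun t => c0 * t + c1 * t ^ 2 / 2 + c2 * t ^ 3 / 3) (c0 + c1 * x + c2 * x ^ 2) x := by
    intro x _
    have h := (((hasDerivAt_id x).const_mul c0).add
        (((hasDerivAt_pow 2 x).const_mul c1).div_const 2)).add
        (((hasDerivAt_pow 3 x).const_mul c2).div_const 3)
    refine h.congr_deriv ?_
    ring
  exact intervalIntegral.integral_eq_sub_of_hasDerivAt h
    (Continuous.intervalIntegrable (by continuity) a b)

lemma fp_piece (F : ℝ → ℝ) (a b c0 c1 c2 : ℝ) (hab : a ≤ b)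
    (h : ∀ x ∈ Set.Ioc a b, F x = c0 + c1 * x + c2 * x ^ 2) :
    IntervalIntegrable F volume a b ∧
      ∫ x in a..b, F x =
        (c0 * b + c1 * b ^ 2 / 2 + c2 * b ^ 3 / 3) - (c0 * a + c1 * a ^ 2 / 2 + c2 * a ^ 3 / 3) := by
  have huIoc : Set.uIoc a b = Set.Ioc a b := Set.uIoc_of_le hab
  have hae : ∀ᵐ x ∂(volume.restrict (Set.uIoc a b)),
      (fun t => c0 + c1 * t + c2 * t ^ 2) x = F x := by
    filter_upwards [ae_restrict_mem measurableSet_uIoc] with x hx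
    rw [huIoc] at hx
    exact (h x hx).symm
  constructor
  · exact (Continuous.intervalIntegrable (by continuity) a b).congr_ae hae
  · rw [← fp_integ_quad a b c0 c1 c2]
    refine intervalIntegral.integral_congr_ae ?_
    filter_upwards with x hx
    exact h x (huIoc ▸ hx)

theorem first_price_not_quasimonotone :
    (∫ x in (0:ℝ)..1, (fp_betat x - fp_beta x) * ((x - fp_beta x) / (61 / 100) - x)) < 0 ∧
    0 < ∫ x in (0:ℝ)..1, (fp_betat x - fp_beta x) * ((x - fp_betat x) / fp_betat' x - x) := by
  constructor
  · set F : ℝ → ℝ := fun x => (fp_betat x - fp_beta x) * ((x - fp_beta x) / (61 / 100) - x) with hF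
    have h1 := fp_piece F 0 (1/3) 0 0 (-429/3050) (by norm_num) (by
      rintro x ⟨hx1, hx2⟩
      simp only [hF, fp_betat, fp_beta, if_pos hx2]
      ring)
    have h2 := fp_piece F (1/3) (2/3) 0 (-33/305) (561/3050) (by norm_num) (by
      rintro x ⟨hx1, hx2⟩
      simp only [hF, fp_betat, fp_beta, if_neg (not_le.mpr hx1), if_pos hx2]
      ring)
    have h3 := fp_piece F (2/3) 1 0 (88/4575) (-11/1525) (by norm_num) (by
      rintro x ⟨hx1, hx2⟩
      have hx1' : ¬ x ≤ 1/3 := by linarith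
      have hx2' : ¬ x ≤ 2/3 := not_le.mpr hx1
      simp only [hF, fp_betat, fp_beta, if_neg hx1', if_neg hx2']
      ring)
    have hsplit : ∫ x in (0:ℝ)..1, F x =
        (∫ x in (0:ℝ)..(1/3), F x) + (∫ x in (1/3:ℝ)..(2/3), F x) + (∫ x in (2/3:ℝ)..1, F x) := by
      rw [intervalIntegral.integral_add_adjacent_intervals h1.1 h2.1,
        intervalIntegral.integral_add_adjacent_intervals (h1.1.trans h2.1) h3.1]
    rw [hsplit, h1.2, h2.2, h3.2]
    norm_num
  · set F : ℝ → ℝ := fun x => (fp_betat x - fp_beta x) * ((x - fp_betat x) / fp_betat' x - x) with hF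
    have h1 := fp_piece F 0 (1/3) 0 0 (-39/100) (by norm_num) (by
      rintro x ⟨hx1, hx2⟩
      simp only [hF, fp_betat, fp_betat', fp_beta, if_pos hx2]
      ring)
    have h2 := fp_piece F (1/3) (2/3) (-9/10) (393/100) (-102/25) (by norm_num) (by
      rintro x ⟨hx1, hx2⟩
      simp only [hF, fp_betat, fp_betat', fp_beta, if_neg (not_le.mpr hx1), if_pos hx2]
      ring)
    have h3 := fp_piece F (2/3) 1 (-64/14175) (16/675) (-13/1575) (by norm_num) (by
      rintro x ⟨hx1, hx2⟩
      have hx1' : ¬ x ≤ 1/3 := by linarith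
      have hx2' : ¬ x ≤ 2/3 := not_le.mpr hx1
      simp only [hF, fp_betat, fp_betat', fp_beta, if_neg hx1', if_neg hx2']
      ring)
    have hsplit : ∫ x in (0:ℝ)..1, F x =
        (∫ x in (0:ℝ)..(1/3), F x) + (∫ x in (1/3:ℝ)..(2/3), F x) + (∫ x in (2/3:ℝ)..1, F x) := by
      rw [intervalIntegral.integral_add_adjacent_intervals h1.1 h2.1,
        intervalIntegral.integral_add_adjacent_intervals (h1.1.trans h2.1) h3.1]
    rw [hsplit, h1.2, h2.2, h3.2]
    norm_num
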